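/- With W as in the SMART inverse-probability weight (W = (I(A)/ℓ)[1 − D + D(R·I(B)/p + (1−R)·I(C)/q)] with the independence and Bernoulli assumptions), for any bounded random variable X measurable with respect to (D, R) and the baseline information (i.e., independent of the treatment-assignment indicators I(A), I(B), I(C) conditionally on (D,R)), E[W·X] = E[X]. -/

import Mathlib

open MeasureTheory ProbabilityTheory

/-- Unbiasedness of inverse probability weighting in a two-stage SMART: with the weight
`W = (I(A)/ℓ)[1 − D + D(R·I(B)/p + (1−R)·I(C)/q)]`, for any bounded random variable `X`
determined by `(D, R)` and baseline information (independent of the treatment indicators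
`IA`, `IB`, `IC` conditionally on `(D, R)`), we have `E[W·X] = E[X]`. -/
theorem smart_ipw_unbiased
    {Ω : Type*} [MeasurableSpace Ω] (μ : Measure Ω) [IsProbabilityMeasure μ]
    (IA D R IB IC X : Ω → ℝ) (ℓ p q : ℝ)
    (hℓ : 0 < ℓ) (hℓ1 : ℓ ≤ 1) (hp : 0 < p) (hp1 : p ≤ 1) (hq : 0 < q) (hq1 : q ≤ 1)
    (hIAm : Measurable IA) (hDm : Measurable D) (hRm : Measurable R)
    (hIBm : Measurable IB) (hICm : Measurable IC) (hXm : Measurable X)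
    (hIA01 : ∀ ω, IA ω = 0 ∨ IA ω = 1) (hD01 : ∀ ω, D ω = 0 ∨ D ω = 1)
    (hR01 : ∀ ω, R ω = 0 ∨ R ω = 1) (hIB01 : ∀ ω, IB ω = 0 ∨ IB ω = 1)
    (hIC01 : ∀ ω, IC ω = 0 ∨ IC ω = 1)
    -- `X` is bounded
    (hXbdd : ∃ C : ℝ, ∀ ω, |X ω| ≤ C)
    -- `IA` is Bernoulli(ℓ), independent of everything else (including `X`)
    (hIAindep : IndepFun IA (fun ω => (D ω, R ω, IB ω, IC ω, X ω)) μ)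
    (hIAmean : ∫ ω, IA ω ∂μ = ℓ)
    -- conditionally on `(D, R)`, `IB` is Bernoulli(p) independent of `X`
    (hB : ∫ ω, D ω * R ω * IB ω * X ω ∂μ = p * ∫ ω, D ω * R ω * X ω ∂μ)
    -- conditionally on `(D, R)`, `IC` is Bernoulli(q) independent of `X`
    (hC : ∫ ω, D ω * (1 - R ω) * IC ω * X ω ∂μ
        = q * ∫ ω, D ω * (1 - R ω) * X ω ∂μ) :
    ∫ ω, (IA ω / ℓ) *
        (1 - D ω + D ω * (R ω * IB ω / p + (1 - R ω) * IC ω / q)) * X ω ∂μ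
      = ∫ ω, X ω ∂μ := by
  obtain ⟨C, hC0⟩ := hXbdd
  -- Bounds for 0/1 variables
  have h01 : ∀ (f : Ω → ℝ), (∀ ω, f ω = 0 ∨ f ω = 1) → ∀ ω, 0 ≤ f ω ∧ f ω ≤ 1 := by
    intro f hf ω; rcases hf ω with h | h <;> simp [h]
  -- integrability of bounded measurable functions
  have intgr : ∀ (f : Ω → ℝ), Measurable f → (∃ M, ∀ ω, |f ω| ≤ M) → Integrable f μ := by
    rintro f hfm ⟨M, hM⟩
    exact ⟨hfm.aestronglyMeasurable,
      (HasFiniteIntegral.of_bounded (C := M) (Filter.Eventually.of_forall hM))⟩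
  -- the second factor times X
  set Y : Ω → ℝ := fun ω =>
    (1 - D ω + D ω * (R ω * IB ω / p + (1 - R ω) * IC ω / q)) * X ω with hY
  have hYm : Measurable Y := by
    apply Measurable.mul _ hXm
    fun_prop
  have hYb : ∀ ω, |Y ω| ≤ (1 + 1/p + 1/q) * C := by
    intro ω
    have hD := h01 D hD01 ω
    have hR := h01 R hR01 ω
    have hIB := h01 IB hIB01 ω
    have hIC := h01 IC hIC01 ω
    have hCnn : 0 ≤ C := le_trans (abs_nonneg _) (hC0 ω)
    have h1 : |1 - D ω + D ω * (R ω * IB ω / p + (1 - R ω) * IC ω / q)|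
        ≤ 1 + 1/p + 1/q := by
      have hR1 : 0 ≤ 1 - R ω := by linarith [hR.2]
      have t1 : 0 ≤ R ω * IB ω / p := div_nonneg (mul_nonneg hR.1 hIB.1) hp.le
      have t2 : 0 ≤ (1 - R ω) * IC ω / q := div_nonneg (mul_nonneg hR1 hIC.1) hq.le
      have u1 : R ω * IB ω / p ≤ 1 / p := by
        gcongr
        nlinarith [hR.1, hR.2, hIB.1, hIB.2]
      have u2 : (1 - R ω) * IC ω / q ≤ 1 / q := by
        gcongr
        nlinarith [hR1, hR.1, hIC.1, hIC.2]
      have hnn : 0 ≤ 1 - D ω + D ω * (R ω * IB ω / p + (1 - R ω) * IC ω / q) := by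
        nlinarith [hD.1, hD.2, t1, t2]
      rw [abs_of_nonneg hnn]
      nlinarith [hD.1, hD.2, t1, t2, u1, u2]
    calc |Y ω| = |1 - D ω + D ω * (R ω * IB ω / p + (1 - R ω) * IC ω / q)| * |X ω| := by
              rw [hY, abs_mul]
      _ ≤ (1 + 1/p + 1/q) * C := by
          apply mul_le_mul h1 (hC0 ω) (abs_nonneg _)
          nlinarith [one_div_pos.2 hp, one_div_pos.2 hq]
  have hYint : Integrable Y μ := intgr Y hYm ⟨_, hYb⟩
  have hIAint : Integrable IA μ := intgr IA hIAm ⟨1, fun ω => by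
    rcases hIA01 ω with h | h <;> simp [h]⟩
  -- independence of IA and Y
  have hindY : IndepFun IA Y μ := by
    have : Y = (fun v : ℝ × ℝ × ℝ × ℝ × ℝ =>
        (1 - v.1 + v.1 * (v.2.1 * v.2.2.1 / p + (1 - v.2.1) * v.2.2.2.1 / q)) * v.2.2.2.2)
        ∘ (fun ω => (D ω, R ω, IB ω, IC ω, X ω)) := rfl
    rw [this]
    exact hIAindep.comp measurable_id (by fun_prop)
  have key : ∫ ω, IA ω * Y ω ∂μ = ℓ * ∫ ω, Y ω ∂μ := by
    have h := hindY.integral_mul_eq_mul_integral hIAint.aestronglyMeasurable hYint.aestronglyMeasurable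
    calc ∫ ω, IA ω * Y ω ∂μ = ∫ ω, (IA * Y) ω ∂μ := rfl
      _ = (∫ ω, IA ω ∂μ) * ∫ ω, Y ω ∂μ := h
      _ = ℓ * ∫ ω, Y ω ∂μ := by rw [hIAmean]
  -- ∫ Y = ∫ X
  have hintX : Integrable X μ := intgr X hXm ⟨C, hC0⟩
  have hYeq : ∫ ω, Y ω ∂μ = ∫ ω, X ω ∂μ := by
    have bdd : ∀ ω, |X ω| ≤ C := hC0
    have i1 : Integrable (fun ω => D ω * X ω) μ := by
      refine intgr _ (by fun_prop) ⟨C, fun ω => ?_⟩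
      have := h01 D hD01 ω
      rw [abs_mul]
      calc |D ω| * |X ω| ≤ 1 * C := by
            apply mul_le_mul _ (bdd ω) (abs_nonneg _) zero_le_one
            rw [abs_of_nonneg this.1]; exact this.2
        _ = C := one_mul C
    have bnd4 : ∀ (f g : Ω → ℝ), (∀ ω, 0 ≤ f ω ∧ f ω ≤ 1) → (∀ ω, 0 ≤ g ω ∧ g ω ≤ 1) →
        ∀ ω, |D ω * f ω * g ω * X ω| ≤ C := by
      intro f g hf hg ω
      have hD := h01 D hD01 ω
      rw [abs_mul, abs_mul, abs_mul]
      have h1 : |D ω| * |f ω| * |g ω| ≤ 1 := by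
        rw [abs_of_nonneg hD.1, abs_of_nonneg (hf ω).1, abs_of_nonneg (hg ω).1]
        exact mul_le_one₀ (mul_le_one₀ hD.2 (hf ω).1 (hf ω).2) (hg ω).1 (hg ω).2
      calc |D ω| * |f ω| * |g ω| * |X ω| ≤ 1 * C :=
            mul_le_mul h1 (bdd ω) (abs_nonneg _) zero_le_one
        _ = C := one_mul C
    have hR' : ∀ ω, 0 ≤ 1 - R ω ∧ 1 - R ω ≤ 1 := fun ω => by
      rcases hR01 ω with h | h <;> simp [h]
    have i2 : Integrable (fun ω => D ω * R ω * IB ω * X ω) μ :=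
      intgr _ (by fun_prop) ⟨C, bnd4 R IB (h01 R hR01) (h01 IB hIB01)⟩
    have i3 : Integrable (fun ω => D ω * (1 - R ω) * IC ω * X ω) μ :=
      intgr _ (by fun_prop) ⟨C, bnd4 (fun ω => 1 - R ω) IC hR' (h01 IC hIC01)⟩
    have i2' : Integrable (fun ω => D ω * R ω * X ω) μ := by
      have : (fun ω => D ω * R ω * X ω) = fun ω => D ω * R ω * (1 : ℝ) * X ω := by
        funext ω; ring
      rw [this]
      exact intgr _ (by fun_prop) ⟨C, bnd4 R (fun _ => 1) (h01 R hR01) (fun _ => by norm_num)⟩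
    have i3' : Integrable (fun ω => D ω * (1 - R ω) * X ω) μ := by
      have : (fun ω => D ω * (1 - R ω) * X ω)
          = fun ω => D ω * (1 - R ω) * (1 : ℝ) * X ω := by funext ω; ring
      rw [this]
      exact intgr _ (by fun_prop) ⟨C, bnd4 (fun ω => 1 - R ω) (fun _ => 1) hR'
        (fun _ => by norm_num)⟩
    have expand : Y = fun ω => X ω - D ω * X ω + ((1/p) * (D ω * R ω * IB ω * X ω)
        + (1/q) * (D ω * (1 - R ω) * IC ω * X ω)) := by
      funext ω
      rw [hY]
      field_simp
    have iA : Integrable (fun ω => X ω - D ω * X ω) μ := hintX.sub i1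
    have iB2 : Integrable (fun ω => 1/p * (D ω * R ω * IB ω * X ω)
        + 1/q * (D ω * (1 - R ω) * IC ω * X ω)) μ := (i2.const_mul _).add (i3.const_mul _)
    rw [expand, integral_add iA iB2, integral_sub hintX i1,
      integral_add (i2.const_mul _) (i3.const_mul _),
      integral_const_mul, integral_const_mul, hB, hC]
    have hsplit : ∫ ω, D ω * R ω * X ω ∂μ + ∫ ω, D ω * (1 - R ω) * X ω ∂μ
        = ∫ ω, D ω * X ω ∂μ := by
      rw [← integral_add i2' i3']
      congr 1; funext ω; ring
    field_simp
    linarith [hsplit]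
  -- finish
  have : (fun ω => (IA ω / ℓ) *
      (1 - D ω + D ω * (R ω * IB ω / p + (1 - R ω) * IC ω / q)) * X ω)
      = fun ω => (1/ℓ) * (IA ω * Y ω) := by
    funext ω; rw [hY]; ring
  rw [this, integral_const_mul, key, hYeq]
  field_simp
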